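/- Let F ∈ ℂ[y1,y2,y3] be homogeneous with partial derivatives F1, F2, and let N(y1,y2,y3,x1,x2) = -F2·(x1·y3 - y1) + F1·(x2·y3 - y2). A point p = (a:b:c) with F(p) = 0 satisfies N(p,x1,x2) = 0 identically in (x1,x2) if and only if either (c ≠ 0 and F1(p) = F2(p) = 0) or (c = 0 and F1(p)^2 + F2(p)^2 = 0). -/

import Mathlib

open MvPolynomial

lemma X_mul_pderiv_monomial {σ : Type*} [DecidableEq σ] (d : σ →₀ ℕ) (c : ℂ) (i : σ) :
    X i * pderiv i (monomial d c) = monomial d (c * d i) := by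
  rw [pderiv_monomial]
  rcases eq_or_ne (d i) 0 with h | h
  · simp [h]
  · rw [mul_comm (X i), ← pow_one (X i), ← monomial_add_single,
      tsub_add_cancel_of_le (Finsupp.single_le_iff.mpr (Nat.one_le_iff_ne_zero.mpr h))]

lemma euler {σ : Type*} [Fintype σ] [DecidableEq σ] (F : MvPolynomial σ ℂ) (n : ℕ)
    (hF : F.IsHomogeneous n) :
    ∑ i, X i * pderiv i F = (n : MvPolynomial σ ℂ) * F := by
  conv_lhs => rw [F.as_sum]
  conv_rhs => rw [F.as_sum]
  rw [Finset.mul_sum]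
  simp only [map_sum, Finset.mul_sum]
  rw [Finset.sum_comm]
  refine Finset.sum_congr rfl fun d hd => ?_
  simp only [_root_.X_mul_pderiv_monomial]
  have hdeg : ∑ i, d i = n := by
    have h2 := hF (mem_support_iff.mp hd)
    rw [← h2]
    simp [Finsupp.weight, Finsupp.linearCombination, Finsupp.sum_fintype]
  rw [← map_sum, ← Finset.mul_sum, ← Nat.cast_sum, hdeg, ← map_natCast (C : ℂ →+* _) n,
    C_mul_monomial, mul_comm]

/-- for the homogenized normal-line polynomial
`N(y,x) = -F2·(x1·y3 - y1) + F1·(x2·y3 - y2)`, a point `p = (a:b:c)` of the projective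
curve `F = 0` satisfies `N(p,x1,x2) = 0` identically in `(x1,x2)` iff either `c ≠ 0` and
`F1(p) = F2(p) = 0`, or `c = 0` and `F1(p)² + F2(p)² = 0`. -/
theorem normal_line_vanishes_iff
    (F : MvPolynomial (Fin 3) ℂ) (n : ℕ) (hF : F.IsHomogeneous n)
    (a b c : ℂ) (hne : ![a, b, c] ≠ 0)
    (hp : eval ![a, b, c] F = 0) :
    (∀ x1 x2 : ℂ,
        -(eval ![a, b, c] (pderiv 1 F)) * (x1 * c - a)
          + eval ![a, b, c] (pderiv 0 F) * (x2 * c - b) = 0)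
      ↔ ((c ≠ 0 ∧ eval ![a, b, c] (pderiv 0 F) = 0 ∧ eval ![a, b, c] (pderiv 1 F) = 0)
          ∨ (c = 0 ∧ eval ![a, b, c] (pderiv 0 F) ^ 2
                + eval ![a, b, c] (pderiv 1 F) ^ 2 = 0)) := by
  set A := eval ![a, b, c] (pderiv 0 F) with hA
  set B := eval ![a, b, c] (pderiv 1 F) with hB
  set D := eval ![a, b, c] (pderiv 2 F) with hD
  have heuler : a * A + b * B + c * D = 0 := by
    have h := congrArg (eval ![a, b, c]) (euler F n hF)
    simp only [map_sum, map_mul, eval_X, Fin.sum_univ_three, map_natCast, hp,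
      mul_zero] at h
    simpa [Matrix.cons_val_zero, Matrix.cons_val_one, Matrix.head_cons] using h
  constructor
  · intro h
    have h00 := h 0 0
    have h10 := h 1 0
    have h01 := h 0 1
    have hab : a * B = b * A := by linear_combination h00
    have hBc : B * c = 0 := by linear_combination h00 - h10
    have hAc : A * c = 0 := by linear_combination h01 - h00
    by_cases hc : c = 0
    · right
      refine ⟨hc, ?_⟩
      subst hc
      have habAB : a * A + b * B = 0 := by linear_combination heuler
      have hane : a ≠ 0 ∨ b ≠ 0 := by
        by_contra hcon
        push_neg at hcon
        apply hne
        funext i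
        fin_cases i <;> simp [hcon.1, hcon.2]
      rcases hane with ha | hb
      · have : a * (A ^ 2 + B ^ 2) = 0 := by linear_combination A * habAB + B * hab
        exact (mul_eq_zero.mp this).resolve_left ha
      · have : b * (A ^ 2 + B ^ 2) = 0 := by linear_combination B * habAB - A * hab
        exact (mul_eq_zero.mp this).resolve_left hb
    · left
      exact ⟨hc, (mul_eq_zero.mp hAc).resolve_right hc, (mul_eq_zero.mp hBc).resolve_right hc⟩
  · rintro (⟨hc, hA0, hB0⟩ | ⟨hc, hAB⟩) x1 x2
    · rw [hA0, hB0]; ring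
    · subst hc
      have habAB : a * A + b * B = 0 := by linear_combination heuler
      have key : a * B - b * A = 0 := by
        by_cases hA0 : A = 0
        · have : B ^ 2 = 0 := by linear_combination hAB - hA0 * A
          have hB0 : B = 0 := by
            have := pow_eq_zero_iff (n := 2) (by norm_num) |>.mp this
            exact this
          rw [hA0, hB0]; ring
        · have h1 : (a * B - b * A) * A = 0 := by
            linear_combination B * habAB - b * hAB
          rcases mul_eq_zero.mp h1 with h | h
          · exact h
          · exact absurd h hA0
      linear_combination key
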